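/- For every p ∈ [1, ∞) there exist N ≥ 1, m ≥ 1, and a probability measure Z on ℝ with finite moments of all orders, such that the set of minimizers over θ ∈ ℝ^N of the expected empirical Wasserstein loss θ ↦ E[W_p(Ẑ_m, Z_θ)], where Ẑ_m = (1/m) ∑_{k=1}^m δ_{Y_k} is the empirical measure of m i.i.d. samples Y_1, …, Y_m drawn from Z, is different from the set of minimizers over θ ∈ ℝ^N of the true Wasserstein loss θ ↦ W_p(Z, Z_θ). -/

import Mathlib

open MeasureTheory Set
open scoped ENNReal

/-- The CDF of a measure on ℝ: `F(y) = μ((-∞, y])`. -/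
noncomputable def cdfFn (μ : Measure ℝ) (y : ℝ) : ℝ := (μ (Iic y)).toReal

/-- The quantile function (generalized inverse CDF): `F⁻¹(ω) = inf {y | ω ≤ F(y)}`. -/
noncomputable def quantileFn (μ : Measure ℝ) (ω : ℝ) : ℝ := sInf {y : ℝ | ω ≤ cdfFn μ y}

/-- The quantile distribution with atoms `θ : Fin N → ℝ`, i.e. `(1/N) ∑ᵢ δ_{θᵢ}`. -/
noncomputable def quantDist {N : ℕ} (θ : Fin N → ℝ) : Measure ℝ :=
  (N : ℝ≥0∞)⁻¹ • ∑ i : Fin N, Measure.dirac (θ i)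

/-- The p-Wasserstein distance `W_p(μ, ν) = (∫_0^1 |F_μ⁻¹(ω) - F_ν⁻¹(ω)|^p dω)^{1/p}`. -/
noncomputable def Wp (p : ℝ) (μ ν : Measure ℝ) : ℝ :=
  (∫ ω in (0:ℝ)..1, |quantileFn μ ω - quantileFn ν ω| ^ p) ^ (1 / p)

lemma quantile_dirac {ω : ℝ} (h0 : 0 < ω) (h1 : ω ≤ 1) (c : ℝ) :
    quantileFn (Measure.dirac c) ω = c := by
  have hset : {y : ℝ | ω ≤ cdfFn (Measure.dirac c) y} = Set.Ici c := by
    ext y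
    simp only [mem_setOf_eq, mem_Ici, cdfFn, Measure.dirac_apply' _ measurableSet_Iic]
    by_cases h : c ≤ y
    · simp only [indicator_of_mem (mem_Iic.2 h), Pi.one_apply, ENNReal.toReal_one]
      exact iff_of_true h1 h
    · simp only [indicator_of_notMem (fun hc => h (mem_Iic.1 hc)), ENNReal.toReal_zero]
      exact iff_of_false (fun hle => absurd (hle.trans_lt h0) (lt_irrefl _)) h
  rw [quantileFn, hset, csInf_Ici]

lemma cdf_two (θ : Fin 2 → ℝ) (y : ℝ) :
    cdfFn (quantDist θ) y
      = 2⁻¹ * ((if θ 0 ≤ y then (1:ℝ) else 0) + (if θ 1 ≤ y then 1 else 0)) := by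
  rw [cdfFn, quantDist]
  rw [Measure.smul_apply]
  rw [show ((∑ i : Fin 2, Measure.dirac (θ i)) (Iic y))
      = (Measure.dirac (θ 0)) (Iic y) + (Measure.dirac (θ 1)) (Iic y) by
    simp [Fin.sum_univ_two]]
  rw [Measure.dirac_apply' _ measurableSet_Iic, Measure.dirac_apply' _ measurableSet_Iic]
  by_cases h0 : θ 0 ≤ y <;> by_cases h1 : θ 1 ≤ y <;>
    simp [indicator, mem_Iic, h0, h1] <;> norm_num

lemma quantile_two_lo (θ : Fin 2 → ℝ) {ω : ℝ} (h0 : 0 < ω) (h2 : ω ≤ 2⁻¹) :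
    quantileFn (quantDist θ) ω = min (θ 0) (θ 1) := by
  have hset : {y : ℝ | ω ≤ cdfFn (quantDist θ) y} = Set.Ici (min (θ 0) (θ 1)) := by
    ext y
    simp only [mem_setOf_eq, mem_Ici, cdf_two]
    by_cases hb0 : θ 0 ≤ y <;> by_cases hb1 : θ 1 ≤ y <;>
      simp only [hb0, hb1, if_true, if_false]
    · exact iff_of_true (by linarith) (le_trans (min_le_left _ _) hb0)
    · exact iff_of_true (by linarith) (le_trans (min_le_left _ _) hb0)
    · exact iff_of_true (by linarith) (le_trans (min_le_right _ _) hb1)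
    · refine iff_of_false (fun h => ?_) (fun h => (min_le_iff.1 h).elim hb0 hb1)
      norm_num at h; linarith
  rw [quantileFn, hset, csInf_Ici]

lemma quantile_two_hi (θ : Fin 2 → ℝ) {ω : ℝ} (h2 : 2⁻¹ < ω) (h1 : ω ≤ 1) :
    quantileFn (quantDist θ) ω = max (θ 0) (θ 1) := by
  have hset : {y : ℝ | ω ≤ cdfFn (quantDist θ) y} = Set.Ici (max (θ 0) (θ 1)) := by
    ext y
    simp only [mem_setOf_eq, mem_Ici, cdf_two]
    by_cases hb0 : θ 0 ≤ y <;> by_cases hb1 : θ 1 ≤ y <;>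
      simp only [hb0, hb1, if_true, if_false]
    · exact iff_of_true (by linarith) (max_le hb0 hb1)
    · refine iff_of_false (fun h => ?_) (fun h => hb1 (le_trans (le_max_right _ _) h))
      norm_num at h; linarith
    · refine iff_of_false (fun h => ?_) (fun h => hb0 (le_trans (le_max_left _ _) h))
      norm_num at h; linarith
    · refine iff_of_false (fun h => ?_) (fun h => hb0 (le_trans (le_max_left _ _) h))
      norm_num at h; linarith
  rw [quantileFn, hset, csInf_Ici]

lemma integral_split (f : ℝ → ℝ) (c1 c2 : ℝ)
    (h1 : ∀ ω ∈ Set.Ioc (0:ℝ) 2⁻¹, f ω = c1)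
    (h2 : ∀ ω ∈ Set.Ioc (2⁻¹:ℝ) 1, f ω = c2) :
    ∫ ω in (0:ℝ)..1, f ω = (c1 + c2) / 2 := by
  have key : ∀ (a b : ℝ) (c : ℝ), (∀ ω ∈ Set.Ioc a b, f ω = c) →
      IntegrableOn f (Set.Ioc a b) volume := by
    intro a b c h
    exact (integrableOn_const (C := c) (by simp [Real.volume_Ioc])).congr_fun
      (fun x hx => (h x hx).symm) measurableSet_Ioc
  rw [intervalIntegral.integral_of_le (by norm_num : (0:ℝ) ≤ 1)]
  rw [show Set.Ioc (0:ℝ) 1 = Set.Ioc 0 2⁻¹ ∪ Set.Ioc 2⁻¹ 1 from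
    (Set.Ioc_union_Ioc_eq_Ioc (by norm_num) (by norm_num)).symm]
  rw [setIntegral_union (Set.Ioc_disjoint_Ioc_of_le le_rfl) measurableSet_Ioc
    (key _ _ _ h1) (key _ _ _ h2)]
  rw [setIntegral_congr_fun measurableSet_Ioc h1,
      setIntegral_congr_fun measurableSet_Ioc h2]
  simp [Real.volume_Ioc]
  norm_num
  ring

lemma Wp_dirac_two (p : ℝ) (y : ℝ) (θ : Fin 2 → ℝ) :
    Wp p (Measure.dirac y) (quantDist θ)
      = ((|y - min (θ 0) (θ 1)| ^ p + |y - max (θ 0) (θ 1)| ^ p) / 2) ^ (1 / p) := by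
  rw [Wp]
  rw [integral_split _ (|y - min (θ 0) (θ 1)| ^ p) (|y - max (θ 0) (θ 1)| ^ p)
    (fun ω hω => by
      rw [quantile_dirac hω.1 (hω.2.trans (by norm_num)),
        quantile_two_lo θ hω.1 hω.2])
    (fun ω hω => by
      rw [quantile_dirac ((by norm_num : (0:ℝ) < 2⁻¹).trans hω.1) hω.2,
        quantile_two_hi θ hω.1 hω.2])]

lemma Wp_Z_two (p : ℝ) (θ : Fin 2 → ℝ) :
    Wp p (quantDist ![(-1:ℝ), 1]) (quantDist θ)
      = ((|(-1 : ℝ) - min (θ 0) (θ 1)| ^ p + |(1:ℝ) - max (θ 0) (θ 1)| ^ p) / 2) ^ (1 / p) := by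
  rw [Wp]
  rw [integral_split _ (|(-1:ℝ) - min (θ 0) (θ 1)| ^ p) (|(1:ℝ) - max (θ 0) (θ 1)| ^ p)
    (fun ω hω => by
      rw [quantile_two_lo ![(-1:ℝ), 1] hω.1 hω.2, quantile_two_lo θ hω.1 hω.2]
      norm_num)
    (fun ω hω => by
      rw [quantile_two_hi ![(-1:ℝ), 1] hω.1 hω.2, quantile_two_hi θ hω.1 hω.2]
      norm_num)]

lemma quantDist_one (Y : Fin 1 → ℝ) : quantDist Y = Measure.dirac (Y 0) := by
  simp [quantDist, Fin.sum_univ_one]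

lemma integrable_dirac' (g : ℝ → ℝ) (a : ℝ) : Integrable g (Measure.dirac a) :=
  (integrable_const (g a)).congr (MeasureTheory.ae_eq_dirac g).symm

lemma quantDist_Z_eq :
    quantDist ![(-1:ℝ), 1] = (2:ℝ≥0∞)⁻¹ • (Measure.dirac (-1) + Measure.dirac 1) := by
  rw [quantDist, Fin.sum_univ_two]
  norm_num

lemma integral_Z (g : ℝ → ℝ) :
    ∫ x, g x ∂(quantDist ![(-1:ℝ), 1]) = (g (-1) + g 1) / 2 := by
  rw [quantDist_Z_eq, integral_smul_measure,
    integral_add_measure (integrable_dirac' g (-1)) (integrable_dirac' g 1),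
    integral_dirac, integral_dirac]
  rw [show ((2:ℝ≥0∞)⁻¹).toReal = (2:ℝ)⁻¹ by simp]
  push_cast
  ring_nf

lemma pi_integral (μ : Measure ℝ) (g : ℝ → ℝ) :
    ∫ Y, g (Y 0) ∂(Measure.pi fun _ : Fin 1 => μ) = ∫ x, g x ∂μ := by
  have h := (measurePreserving_funUnique μ (Fin 1)).integral_comp
    (MeasurableEquiv.funUnique (Fin 1) ℝ).measurableEmbedding g
  rw [← h]
  rfl

lemma power_mean {p : ℝ} (hp : 1 ≤ p) {x y : ℝ} (hx : 0 ≤ x) (hy : 0 ≤ y) :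
    (x + y) / 2 ≤ ((x ^ p + y ^ p) / 2) ^ (1 / p) := by
  have hp0 : p ≠ 0 := by linarith
  have h := (convexOn_rpow hp).2 (Set.mem_Ici.2 hx) (Set.mem_Ici.2 hy)
    (by norm_num : (0:ℝ) ≤ 1/2) (by norm_num : (0:ℝ) ≤ 1/2) (by norm_num)
  simp only [smul_eq_mul] at h
  have h0 : (0:ℝ) ≤ (x + y) / 2 := by positivity
  have h' : ((x + y) / 2) ^ p ≤ (x ^ p + y ^ p) / 2 := by
    rw [show (x + y) / 2 = 1/2 * x + 1/2 * y by ring]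
    exact h.trans (by ring_nf; exact le_refl _)
  calc (x + y) / 2 = (((x + y) / 2) ^ p) ^ (1/p) := by
        rw [← Real.rpow_mul h0, mul_one_div, div_self hp0, Real.rpow_one]
    _ ≤ ((x ^ p + y ^ p) / 2) ^ (1/p) :=
        Real.rpow_le_rpow (by positivity) h' (by positivity)


/-- for every `p ∈ [1, ∞)` there are `N, m ≥ 1` and a probability measure `Z` on ℝ
with finite moments of all orders such that the minimizers of the expected empirical Wasserstein
loss `θ ↦ E[W_p(Ẑ_m, Z_θ)]` (with `Ẑ_m` the empirical measure of `m` i.i.d. samples from `Z`)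
differ from the minimizers of the true Wasserstein loss `θ ↦ W_p(Z, Z_θ)`. -/
theorem biased_wasserstein_gradients (p : ℝ) (hp : 1 ≤ p) :
    ∃ (N m : ℕ) (Z : Measure ℝ), 1 ≤ N ∧ 1 ≤ m ∧ IsProbabilityMeasure Z ∧
      (∀ k : ℕ, Integrable (fun x : ℝ => |x| ^ k) Z) ∧
      {θ : Fin N → ℝ | ∀ θ' : Fin N → ℝ,
          (∫ Y, Wp p (quantDist Y) (quantDist θ) ∂(Measure.pi fun _ : Fin m => Z))
            ≤ ∫ Y, Wp p (quantDist Y) (quantDist θ') ∂(Measure.pi fun _ : Fin m => Z)} ≠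
      {θ : Fin N → ℝ | ∀ θ' : Fin N → ℝ, Wp p Z (quantDist θ) ≤ Wp p Z (quantDist θ')} := by
  have hp0 : p ≠ 0 := by linarith
  refine ⟨2, 1, quantDist ![(-1:ℝ), 1], one_le_two, le_refl 1, ?_, ?_, ?_⟩
  · constructor
    rw [quantDist_Z_eq]
    simp [Measure.smul_apply]
    exact ENNReal.inv_two_add_inv_two
  · intro k
    rw [quantDist_Z_eq]
    exact ((integrable_dirac' _ (-1)).add_measure (integrable_dirac' _ 1)).smul_measure
      (by norm_num)
  · intro heq
    set Z := quantDist ![(-1:ℝ), 1] with hZ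
    have hE : ∀ θ : Fin 2 → ℝ,
        (∫ Y, Wp p (quantDist Y) (quantDist θ) ∂(Measure.pi fun _ : Fin 1 => Z))
          = (((|(-1:ℝ) - min (θ 0) (θ 1)| ^ p + |(-1:ℝ) - max (θ 0) (θ 1)| ^ p) / 2) ^ (1/p)
            + ((|(1:ℝ) - min (θ 0) (θ 1)| ^ p + |(1:ℝ) - max (θ 0) (θ 1)| ^ p) / 2) ^ (1/p)) / 2 := by
      intro θ
      have hfun : (fun Y : Fin 1 → ℝ => Wp p (quantDist Y) (quantDist θ))
          = fun Y => (fun x => Wp p (Measure.dirac x) (quantDist θ)) (Y 0) := by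
        funext Y; rw [quantDist_one]
      calc (∫ Y, Wp p (quantDist Y) (quantDist θ) ∂(Measure.pi fun _ : Fin 1 => Z))
          = ∫ Y, (fun x => Wp p (Measure.dirac x) (quantDist θ)) (Y 0)
              ∂(Measure.pi fun _ : Fin 1 => Z) := by rw [hfun]
        _ = ∫ x, Wp p (Measure.dirac x) (quantDist θ) ∂Z :=
            pi_integral Z (fun x => Wp p (Measure.dirac x) (quantDist θ))
        _ = _ := by rw [integral_Z, Wp_dirac_two, Wp_dirac_two]
    have hmem : (fun _ => (0:ℝ)) ∈ {θ : Fin 2 → ℝ | ∀ θ' : Fin 2 → ℝ,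
        (∫ Y, Wp p (quantDist Y) (quantDist θ) ∂(Measure.pi fun _ : Fin 1 => Z))
          ≤ ∫ Y, Wp p (quantDist Y) (quantDist θ') ∂(Measure.pi fun _ : Fin 1 => Z)} := by
      intro θ'
      rw [hE, hE]
      have hL : (((|(-1:ℝ) - min ((0:ℝ)) 0| ^ p + |(-1:ℝ) - max (0:ℝ) 0| ^ p) / 2) ^ (1/p)
            + ((|(1:ℝ) - min (0:ℝ) 0| ^ p + |(1:ℝ) - max (0:ℝ) 0| ^ p) / 2) ^ (1/p)) / 2 = 1 := by
        norm_num [Real.one_rpow]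
      simp only [min_self, max_self] at hL ⊢
      rw [hL]
      set a := min (θ' 0) (θ' 1)
      set b := max (θ' 0) (θ' 1)
      have hA := power_mean hp (abs_nonneg ((-1:ℝ) - a)) (abs_nonneg ((-1:ℝ) - b))
      have hB := power_mean hp (abs_nonneg ((1:ℝ) - a)) (abs_nonneg ((1:ℝ) - b))
      have h1 : (2:ℝ) ≤ |(-1:ℝ) - a| + |(1:ℝ) - a| := by
        calc (2:ℝ) = |((1:ℝ) - a) - ((-1:ℝ) - a)| := by norm_num
          _ ≤ |(1:ℝ) - a| + |(-1:ℝ) - a| := abs_sub _ _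
          _ = |(-1:ℝ) - a| + |(1:ℝ) - a| := by ring
      have h2 : (2:ℝ) ≤ |(-1:ℝ) - b| + |(1:ℝ) - b| := by
        calc (2:ℝ) = |((1:ℝ) - b) - ((-1:ℝ) - b)| := by norm_num
          _ ≤ |(1:ℝ) - b| + |(-1:ℝ) - b| := abs_sub _ _
          _ = |(-1:ℝ) - b| + |(1:ℝ) - b| := by ring
      linarith
    rw [heq] at hmem
    have hfinal := hmem ![(-1:ℝ), 1]
    rw [Wp_Z_two, Wp_Z_two] at hfinal
    simp only [min_self, max_self] at hfinal
    have e1 : (![(-1:ℝ), 1] 0) = -1 := rfl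
    have e2 : (![(-1:ℝ), 1] 1) = 1 := rfl
    rw [e1, e2, min_eq_left (by norm_num : (-1:ℝ) ≤ 1),
      max_eq_right (by norm_num : (-1:ℝ) ≤ 1)] at hfinal
    norm_num [Real.one_rpow, Real.zero_rpow hp0,
      Real.zero_rpow (one_div_ne_zero hp0), Real.zero_rpow (inv_ne_zero hp0)] at hfinal
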